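/- Let T_x be a nonnegative random variable whose survival function is P(T_x > t) = exp(−Λ_x(t)), where Λ_x is the solution of the transformation ODE model at covariate x ∈ ℝ^d, and define the transformation φ(t) = log A(t) for t > 0. Then for every s ∈ ℝ, P(φ(T_x) > s) = G_q(exp(s + ⟨x, β⟩)); equivalently, the distribution of exp(φ(T_x) + ⟨x, β⟩) has survival function G_q and does not depend on x, so that φ(T_x) = −⟨x, β⟩ + ε with δ = exp(ε) having survival function G_q. -/

import Mathlib

open Real MeasureTheory Filter Set intervalIntegral Topology

lemma my_ftc_within {f F : ℝ → ℝ} (hf : ContinuousOn f (Ici 0))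
    (hF : ∀ t, F t = ∫ s in (0:ℝ)..t, f s) :
    ∀ t, 0 ≤ t → HasDerivWithinAt F (f t) (Ici 0) t := by
  intro t ht
  have hint : IntervalIntegrable f volume 0 t := by
    apply (hf.mono _).intervalIntegrable
    rw [uIcc_of_le ht]; exact Icc_subset_Ici_self
  have key : HasDerivWithinAt (fun u => ∫ s in (0:ℝ)..u, f s) (f t) (Ici 0) t := by
    rcases ht.eq_or_lt with h | h
    · subst h
      exact integral_hasDerivWithinAt_right (s := Ici 0) hint
        ⟨Ioi 0, self_mem_nhdsWithin,
          (hf.mono Ioi_subset_Ici_self).aestronglyMeasurable measurableSet_Ioi⟩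
        ((hf 0 self_mem_Ici).mono Ioi_subset_Ici_self)
    · exact (integral_hasDerivAt_right hint
        ⟨Ici 0, Ici_mem_nhds h, hf.aestronglyMeasurable measurableSet_Ici⟩
        (hf.continuousAt (Ici_mem_nhds h))).hasDerivWithinAt
  exact key.congr (fun u _ => hF u) (hF t)

-- nonnegativity of solutions of the ODE
lemma my_sol_nonneg {q α Λ : ℝ → ℝ} {E : ℝ} (hE : 0 < E)
    (hqpos : ∀ u, 0 ≤ u → 0 < q u) (hαpos : ∀ t, 0 ≤ t → 0 < α t)
    (hΛ0 : Λ 0 = 0)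
    (hΛ : ∀ t, 0 ≤ t → HasDerivWithinAt Λ (q (Λ t) * E * α t) (Ici 0) t) :
    ∀ t, 0 ≤ t → 0 ≤ Λ t := by
  have hΛc : ContinuousOn Λ (Ici 0) := fun t ht => (hΛ t ht).continuousWithinAt
  intro t ht
  by_contra hneg
  push_neg at hneg
  have h0t : 0 < t := by
    rcases ht.eq_or_lt with h | h
    · exact absurd hneg (by rw [← h, hΛ0]; exact lt_irrefl 0)
    · exact h
  set S := Icc 0 t ∩ Λ ⁻¹' (Ici 0) with hSdef
  have hSne : S.Nonempty := ⟨0, ⟨le_refl 0, h0t.le⟩, by simp [hΛ0]⟩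
  have hSbdd : BddAbove S := ⟨t, fun s hs => hs.1.2⟩
  have hSsub : S ⊆ Ici 0 := fun s hs => hs.1.1
  have hSclosed : IsClosed S := by
    have h1 : IsClosed (Icc (0:ℝ) t ∩ Λ ⁻¹' (Ici 0)) := by
      have := (hΛc.mono (Icc_subset_Ici_self : Icc (0:ℝ) t ⊆ Ici 0))
      exact this.preimage_isClosed_of_isClosed isClosed_Icc isClosed_Ici
    exact h1
  set t1 := sSup S with ht1def
  have ht1S : t1 ∈ S := hSclosed.csSup_mem hSne hSbdd
  have ht1nn : 0 ≤ t1 := ht1S.1.1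
  have ht1t : t1 < t := by
    rcases ht1S.1.2.eq_or_lt with h | h
    · exact absurd (h ▸ ht1S.2) (not_le.mpr hneg)
    · exact h
  have hub : ∀ s, t1 < s → s ≤ t → Λ s < 0 := by
    intro s hs1 hst
    by_contra h; push_neg at h
    exact absurd (le_csSup hSbdd ⟨⟨le_trans ht1nn hs1.le, hst⟩, h⟩) (not_le.mpr hs1)
  have hΛt1 : Λ t1 = 0 := by
    refine le_antisymm ?_ ht1S.2
    have hcw : ContinuousWithinAt Λ (Ioc t1 t) t1 :=
      (hΛc t1 ht1nn).mono (fun s hs => le_trans ht1nn hs.1.le)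
    have hne : (𝓝[Ioc t1 t] t1).NeBot := by
      rw [nhdsWithin_Ioc_eq_nhdsGT ht1t]; infer_instance
    refine le_of_tendsto hcw ?_
    exact eventually_nhdsWithin_of_forall (fun s hs => (hub s hs.1 hs.2).le)
  have hd : HasDerivWithinAt Λ (q 0 * E * α t1) (Ici 0) t1 := by
    have := hΛ t1 ht1nn; rwa [hΛt1] at this
  have hdpos : 0 < q 0 * E * α t1 :=
    mul_pos (mul_pos (hqpos 0 le_rfl) hE) (hαpos t1 ht1nn)
  have hslope : Tendsto (slope Λ t1) (𝓝[>] t1) (𝓝 (q 0 * E * α t1)) := by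
    have h1 := hasDerivWithinAt_iff_tendsto_slope.mp hd
    refine h1.mono_left (nhdsWithin_mono t1 ?_)
    intro s hs
    exact ⟨le_trans ht1nn (le_of_lt hs), ne_of_gt hs⟩
  have hev : ∀ᶠ s in 𝓝[>] t1, 0 < slope Λ t1 s := hslope.eventually (eventually_gt_nhds hdpos)
  have hev2 : Ioo t1 t ∈ 𝓝[>] t1 := Ioo_mem_nhdsGT_of_mem ⟨le_refl t1, ht1t⟩
  obtain ⟨s, hss, hsm⟩ := (hev.and (eventually_mem_nhdsWithin.and (eventually_of_mem hev2 (fun x hx => hx)))).exists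
  obtain ⟨hs1, hs2⟩ := hsm
  have hΛs : Λ s < 0 := hub s hs2.1 hs2.2.le
  rw [slope_def_field, hΛt1, sub_zero] at hss
  have : 0 < Λ s := by
    have h3 : 0 < s - t1 := sub_pos.mpr hs2.1
    have := mul_pos hss h3
    rwa [div_mul_cancel₀ _ (ne_of_gt h3)] at this
  linarith

theorem stmt_8
    (d : ℕ) (hd : 1 ≤ d)
    (q α : ℝ → ℝ) (β : Fin d → ℝ)
    (hqc : ContinuousOn q (Ici 0)) (hqpos : ∀ u, 0 ≤ u → 0 < q u)
    (hαc : ContinuousOn α (Ici 0)) (hαpos : ∀ t, 0 ≤ t → 0 < α t)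
    (A Q : ℝ → ℝ)
    (hA : ∀ t, A t = ∫ s in (0:ℝ)..t, α s)
    (hQ : ∀ u, Q u = ∫ v in (0:ℝ)..u, (q v)⁻¹)
    (hQtop : Tendsto Q atTop atTop)
    (hAtop : Tendsto A atTop atTop)
    -- H_q and its inverse G_q
    (H G : ℝ → ℝ)
    (hH : ∀ u ∈ Ioc (0:ℝ) 1, H u = ∫ v in (0:ℝ)..(-Real.log u), (q v)⁻¹)
    (hGmem : ∀ s, 0 ≤ s → G s ∈ Ioc (0:ℝ) 1)
    (hHG : ∀ s, 0 ≤ s → H (G s) = s)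
    (hGH : ∀ u ∈ Ioc (0:ℝ) 1, G (H u) = u)
    (x : Fin d → ℝ)
    -- Λ is the solution of the initial value problem at covariate x
    (Λ : ℝ → ℝ)
    (hΛ0 : Λ 0 = 0)
    (hΛ : ∀ t, 0 ≤ t → HasDerivWithinAt Λ
      (q (Λ t) * Real.exp (∑ i, x i * β i) * α t) (Ici 0) t)
    -- T is a nonnegative random variable with survival function exp(−Λ(·))
    (Ω : Type*) [MeasurableSpace Ω] (μ : Measure Ω) [IsProbabilityMeasure μ]
    (T : Ω → ℝ)
    (hTm : Measurable T)
    (hTnn : ∀ ω, 0 ≤ T ω)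
    (hTsurv : ∀ t, 0 ≤ t → μ {ω | t < T ω} = ENNReal.ofReal (Real.exp (-(Λ t)))) :
    (∀ s : ℝ,
        μ {ω | s < Real.log (A (T ω))} =
          ENNReal.ofReal (G (Real.exp (s + ∑ i, x i * β i)))) ∧
      (∀ s : ℝ, 0 ≤ s →
        μ {ω | s < Real.exp (Real.log (A (T ω)) + ∑ i, x i * β i)} =
          ENNReal.ofReal (G s)) := by
  set c := ∑ i, x i * β i with hc
  set E := Real.exp c with hEdef
  have hEpos : 0 < E := Real.exp_pos c
  -- basic facts
  have hA0 : A 0 = 0 := by rw [hA]; simp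
  have hQ0 : Q 0 = 0 := by rw [hQ]; simp
  have hqinv : ContinuousOn (fun v => (q v)⁻¹) (Ici 0) :=
    hqc.inv₀ (fun u hu => (hqpos u hu).ne')
  have hA' : ∀ t, 0 ≤ t → HasDerivWithinAt A (α t) (Ici 0) t := my_ftc_within hαc hA
  have hQ' : ∀ u, 0 ≤ u → HasDerivWithinAt Q ((q u)⁻¹) (Ici 0) u := my_ftc_within hqinv hQ
  have hΛnn : ∀ t, 0 ≤ t → 0 ≤ Λ t := my_sol_nonneg hEpos hqpos hαpos hΛ0 hΛ
  have hMapsTo : MapsTo Λ (Ici 0) (Ici 0) := fun t ht => hΛnn t ht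
  -- Q(Λ t) = E * A t
  have key : ∀ t, 0 ≤ t → Q (Λ t) = E * A t := by
    have hF : ∀ t ∈ Ici (0:ℝ), HasDerivWithinAt (fun t => Q (Λ t) - E * A t) 0 (Ici 0) t := by
      intro t ht
      have h1 : HasDerivWithinAt (fun t => Q (Λ t)) ((q (Λ t))⁻¹ * (q (Λ t) * E * α t)) (Ici 0) t :=
        (hQ' (Λ t) (hΛnn t ht)).comp t (hΛ t ht) hMapsTo
      have h2 : HasDerivWithinAt (fun t => E * A t) (E * α t) (Ici 0) t := (hA' t ht).const_mul E
      have h3 := h1.sub h2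
      have hqne : q (Λ t) ≠ 0 := (hqpos _ (hΛnn t ht)).ne'
      have h4 : (q (Λ t))⁻¹ * (q (Λ t) * E * α t) - E * α t = 0 := by
        field_simp
        ring
      rwa [h4] at h3
    intro t ht
    have hb := Convex.norm_image_sub_le_of_norm_hasDerivWithin_le (f' := fun _ => (0:ℝ))
        (C := 0) hF (fun x hx => le_of_eq norm_zero) (convex_Ici 0) self_mem_Ici ht
    simp only [hΛ0, hQ0, hA0, mul_zero, sub_zero, zero_mul, norm_le_zero_iff, sub_eq_zero] at hb
    linarith [hb]
  -- A strictly monotone on Ici 0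
  have hAc : ContinuousOn A (Ici 0) := fun t ht => (hA' t ht).continuousWithinAt
  have hAmono : StrictMonoOn A (Ici 0) := by
    apply strictMonoOn_of_deriv_pos (convex_Ici 0) hAc
    intro t ht
    rw [interior_Ici] at ht
    rw [((hA' t ht.le).hasDerivAt (Ici_mem_nhds ht)).deriv]
    exact hαpos t ht.le
  have hQmono : StrictMonoOn Q (Ici 0) := by
    apply strictMonoOn_of_deriv_pos (convex_Ici 0)
      (fun u hu => (hQ' u hu).continuousWithinAt)
    intro u hu
    rw [interior_Ici] at hu
    rw [((hQ' u hu.le).hasDerivAt (Ici_mem_nhds hu)).deriv]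
    exact inv_pos.mpr (hqpos u hu.le)
  -- existence of t_s with A t_s = exp s
  have hts : ∀ s : ℝ, ∃ ts, 0 ≤ ts ∧ A ts = Real.exp s := by
    intro s
    obtain ⟨b, hb1, hb2⟩ := ((hAtop.eventually_ge_atTop (Real.exp s)).and
      (eventually_ge_atTop (0:ℝ))).exists
    have him := intermediate_value_Icc hb2 (hAc.mono (Icc_subset_Ici_self : Icc (0:ℝ) b ⊆ Ici 0))
    have : Real.exp s ∈ Icc (A 0) (A b) := ⟨by rw [hA0]; exact (Real.exp_pos s).le, hb1⟩
    obtain ⟨ts, hts1, hts2⟩ := him this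
    exact ⟨ts, hts1.1, hts2⟩
  -- T > 0 almost everywhere
  have hae : ∀ᵐ ω ∂μ, 0 < T ω := by
    have hmeas : MeasurableSet {ω | 0 < T ω} := measurableSet_lt measurable_const hTm
    have h1 : μ {ω | 0 < T ω} = 1 := by
      rw [hTsurv 0 le_rfl, hΛ0]; simp
    rw [ae_iff]
    have : {ω | ¬ 0 < T ω} = {ω | 0 < T ω}ᶜ := rfl
    rw [this, measure_compl hmeas (measure_ne_top μ _), h1, measure_univ, tsub_self]
  -- main statement (part 1)
  have main : ∀ s : ℝ, μ {ω | s < Real.log (A (T ω))} =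
      ENNReal.ofReal (G (Real.exp (s + c))) := by
    intro s
    obtain ⟨ts, hts0, htsA⟩ := hts s
    have heq : {ω | s < Real.log (A (T ω))} =ᵐ[μ] {ω | ts < T ω} := by
      filter_upwards [hae] with ω hω
      have hATpos : 0 < A (T ω) := by
        have := hAmono (self_mem_Ici) (mem_Ici.mpr (hTnn ω)) hω
        rwa [hA0] at this
      have h1 : s < Real.log (A (T ω)) ↔ Real.exp s < A (T ω) :=
        (Real.lt_log_iff_exp_lt hATpos)
      have h2 : Real.exp s < A (T ω) ↔ ts < T ω := by
        rw [← htsA]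
        exact hAmono.lt_iff_lt (mem_Ici.mpr hts0) (mem_Ici.mpr (hTnn ω))
      simp only [eq_iff_iff]
      exact h1.trans h2
    rw [measure_congr heq, hTsurv ts hts0]
    congr 1
    -- exp(−Λ ts) = G (exp (s + c))
    have hΛts : 0 ≤ Λ ts := hΛnn ts hts0
    have hu : Real.exp (-(Λ ts)) ∈ Ioc (0:ℝ) 1 :=
      ⟨Real.exp_pos _, Real.exp_le_one_iff.mpr (neg_nonpos.mpr hΛts)⟩
    have hHu : H (Real.exp (-(Λ ts))) = Real.exp (s + c) := by
      rw [hH _ hu, Real.log_exp, neg_neg, ← hQ, key ts hts0, htsA, hEdef, ← Real.exp_add,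
        add_comm]
    rw [← hHu, hGH _ hu]
  refine ⟨main, fun s hs => ?_⟩
  rcases hs.eq_or_lt with h0 | hpos
  · -- s = 0
    have hset : {ω | s < Real.exp (Real.log (A (T ω)) + c)} = univ := by
      apply eq_univ_of_forall
      intro ω
      simp only [mem_setOf_eq, ← h0]
      exact Real.exp_pos _
    have hG1 : G s = 1 := by
      have hGs := hGmem s hs
      have hHGs := hHG s hs
      rw [hH _ hGs, ← hQ] at hHGs
      have hlog : 0 ≤ -Real.log (G s) := neg_nonneg.mpr (Real.log_nonpos hGs.1.le hGs.2)
      have : -Real.log (G s) = 0 := by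
        apply hQmono.injOn (mem_Ici.mpr hlog) self_mem_Ici
        rw [hQ0, hHGs, ← h0]
      have hlog0 : Real.log (G s) = 0 := by linarith
      have := Real.exp_log hGs.1
      rw [hlog0, Real.exp_zero] at this
      exact this.symm
    rw [hset, hG1, measure_univ, ENNReal.ofReal_one]
  · -- s > 0
    have hset : {ω | s < Real.exp (Real.log (A (T ω)) + c)} =
        {ω | Real.log s - c < Real.log (A (T ω))} := by
      ext ω
      simp only [mem_setOf_eq]
      rw [← Real.log_lt_iff_lt_exp hpos, sub_lt_iff_lt_add]
    rw [hset, main (Real.log s - c), sub_add_cancel, Real.exp_log hpos]
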